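/- Server's reduced state independence in the Kerenidis et al. protocol: for the state Σ_r (-1)^{r·DB_{b*}} |r⟩_R|r⟩_{R'}|r·DB₀⟩_{Q₀}|r·DB₁⟩_{Q₁} (normalized), the reduced density matrix on the server registers R, Q₀, Q₁ equals (1/2^{n/2}) Σ_r |r⟩⟨r|_R ⊗ |r·DB₀⟩⟨r·DB₀|_{Q₀} ⊗ |r·DB₁⟩⟨r·DB₁|_{Q₁}, which is independent of b*. -/

import Mathlib

open Matrix Kronecker BigOperators Finset
open scoped ComplexOrder

/-- Trace distance: half the trace norm of the difference. -/
noncomputable def traceDist {d : Type*} [Fintype d] [DecidableEq d]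
    (ρ σ : Matrix d d ℂ) : ℝ :=
  (((Matrix.posSemidef_conjTranspose_mul_self (ρ - σ)).isHermitian.eigenvectorUnitary.1 *
      diagonal (((↑) : ℝ → ℂ) ∘ Real.sqrt ∘ (Matrix.posSemidef_conjTranspose_mul_self (ρ - σ)).isHermitian.eigenvalues) *
      (star (Matrix.posSemidef_conjTranspose_mul_self (ρ - σ)).isHermitian.eigenvectorUnitary : Matrix d d ℂ)).trace).re / 2

/-- A density operator: positive semidefinite with unit trace. -/
def IsDensity {d : Type*} [Fintype d] [DecidableEq d] (ρ : Matrix d d ℂ) : Prop :=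
  ρ.PosSemidef ∧ ρ.trace = 1

/-- Rank-one projection `|v⟩⟨v|` onto a vector. -/
def proj {d : Type*} [Fintype d] [DecidableEq d] (v : d → ℂ) : Matrix d d ℂ :=
  Matrix.vecMulVec v (star v)

/-- A unit vector. -/
def IsUnit' {d : Type*} [Fintype d] (v : d → ℂ) : Prop :=
  dotProduct (star v) v = 1

/-- Partial trace over the second tensor factor. -/
noncomputable def ptraceY {X Y : Type*} [Fintype X] [Fintype Y] [DecidableEq X] [DecidableEq Y]
    (ρ : Matrix (X × Y) (X × Y) ℂ) : Matrix X X ℂ :=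
  fun x x' => ∑ y : Y, ρ (x, y) (x', y)

/-- Server's reduced state independence in the Kerenidis et al. protocol: tracing
out the client register `R'` from the phased state
`Σ_r (-1)^{r·DB_{b*}} |r⟩_R |r⟩_{R'} |r·DB₀⟩_{Q₀} |r·DB₁⟩_{Q₁}` (normalized) gives
the classical mixture `2^{-m} Σ_r |r⟩⟨r| ⊗ |r·DB₀⟩⟨r·DB₀| ⊗ |r·DB₁⟩⟨r·DB₁|`,
which is independent of `b*`. -/
theorem kerenidis_reduced_state_independent
    {m : Type*} [Fintype m] [DecidableEq m]
    (DB₀ DB₁ : m → ZMod 2) (bstar : Fin 2)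
    (D : m → ZMod 2) (hD : D = if bstar = 0 then DB₀ else DB₁)
    (Ψ : ((m → ZMod 2) × (m → ZMod 2) × ZMod 2 × ZMod 2) → ℂ)
    (hΨ : Ψ = fun p =>
      if p.2.1 = p.1 ∧ p.2.2.1 = (∑ i, p.1 i * DB₀ i) ∧ p.2.2.2 = (∑ i, p.1 i * DB₁ i)
      then ((Real.sqrt (2 ^ Fintype.card m) : ℂ))⁻¹ *
        (-1 : ℂ) ^ (∑ i, p.1 i * D i : ZMod 2).val
      else 0) :
    (fun (a b : (m → ZMod 2) × ZMod 2 × ZMod 2) =>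
        ∑ r' : m → ZMod 2,
          Ψ (a.1, r', a.2.1, a.2.2) * star (Ψ (b.1, r', b.2.1, b.2.2)))
      = fun a b =>
        if b.1 = a.1 ∧ a.2.1 = (∑ i, a.1 i * DB₀ i) ∧ a.2.2 = (∑ i, a.1 i * DB₁ i)
            ∧ b.2.1 = a.2.1 ∧ b.2.2 = a.2.2
        then ((2 : ℂ) ^ Fintype.card m)⁻¹ else 0 := by
  subst hΨ
  funext a b
  obtain ⟨a1, a2, a3⟩ := a
  obtain ⟨b1, b2, b3⟩ := b
  simp only
  by_cases hb : b1 = a1 ∧ a2 = (∑ i, a1 i * DB₀ i) ∧ a3 = (∑ i, a1 i * DB₁ i)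
      ∧ b2 = a2 ∧ b3 = a3
  · obtain ⟨h1, h2, h3, h4, h5⟩ := hb
    subst h1 h2 h3 h4 h5
    rw [if_pos ⟨rfl, rfl, rfl, rfl, rfl⟩]
    rw [Finset.sum_eq_single b1]
    · rw [if_pos ⟨rfl, rfl, rfl⟩]
      rw [star_mul', star_inv₀]
      have hs : star ((Real.sqrt (2 ^ Fintype.card m) : ℂ)) = (Real.sqrt (2 ^ Fintype.card m) : ℂ) := by
        simp
      have hp : star ((-1 : ℂ) ^ (∑ i, b1 i * D i : ZMod 2).val) = (-1 : ℂ) ^ (∑ i, b1 i * D i : ZMod 2).val := by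
        simp
      rw [hs, hp]
      have hpow : ((-1 : ℂ) ^ (∑ i, b1 i * D i : ZMod 2).val) * ((-1 : ℂ) ^ (∑ i, b1 i * D i : ZMod 2).val) = 1 := by
        rw [← pow_add, ← two_mul, pow_mul]
        norm_num
      have hsq : ((Real.sqrt (2 ^ Fintype.card m) : ℂ)) * ((Real.sqrt (2 ^ Fintype.card m) : ℂ)) = (2 : ℂ) ^ Fintype.card m := by
        rw [← Complex.ofReal_mul, Real.mul_self_sqrt (by positivity)]
        push_cast
        ring
      field_simp
      rw [sq, hpow, one_mul, sq, hsq]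
    · intro r' _ hr'
      rw [if_neg (fun h => hr' h.1), zero_mul]
    · intro h
      exact absurd (Finset.mem_univ b1) h
  · rw [if_neg hb]
    apply Finset.sum_eq_zero
    intro r' _
    by_cases h1 : r' = a1 ∧ a2 = (∑ i, a1 i * DB₀ i) ∧ a3 = (∑ i, a1 i * DB₁ i)
    · by_cases h2 : r' = b1 ∧ b2 = (∑ i, b1 i * DB₀ i) ∧ b3 = (∑ i, b1 i * DB₁ i)
      · exfalso
        apply hb
        obtain ⟨e1, e2, e3⟩ := h1
        obtain ⟨f1, f2, f3⟩ := h2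
        have : b1 = a1 := by rw [← f1, e1]
        subst this
        exact ⟨rfl, e2, e3, by rw [f2, e2], by rw [f3, e3]⟩
      · rw [if_neg h2, star_zero, mul_zero]
    · rw [if_neg h1, zero_mul]
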